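/- The 5-dimensional Lie algebra V spanned by X₁,...,X₅ decomposes as a semidirect sum V = V₁ ⊕ₛ V₂, where V₁ = span{X₁,X₅} is the radical (a 2-dimensional abelian ideal) and V₂ = span{X₂,X₃,X₄} is a subalgebra isomorphic to sl(2,ℝ); in particular [V₂,V₁] ⊆ V₁ and V₁ ∩ V₂ = 0. -/

import Mathlib

open Real

/-- The half-plane `O = {(x,p) : p < 0}`. -/
def O : Set (ℝ × ℝ) := {z | z.2 < 0}

/-- Lie bracket of vector fields on `ℝ²`: `[V,W] = DW·V - DV·W`. -/
noncomputable def bracket (V W : ℝ × ℝ → ℝ × ℝ) (z : ℝ × ℝ) : ℝ × ℝ :=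
  fderiv ℝ W z (V z) - fderiv ℝ V z (W z)

noncomputable def X₁ : ℝ × ℝ → ℝ × ℝ := fun z => (1 / Real.sqrt (-z.2), 0)
def X₂ : ℝ × ℝ → ℝ × ℝ := fun _ => (1, 0)
def X₃ : ℝ × ℝ → ℝ × ℝ := fun z => (z.1, -z.2)
def X₄ : ℝ × ℝ → ℝ × ℝ := fun z => (z.1 ^ 2, -2 * z.1 * z.2)
noncomputable def X₅ : ℝ × ℝ → ℝ × ℝ :=
  fun z => (z.1 / Real.sqrt (-z.2), 2 * Real.sqrt (-z.2))

noncomputable def XF : Fin 5 → (ℝ × ℝ → ℝ × ℝ) := ![X₁, X₂, X₃, X₄, X₅]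

noncomputable def Y₂ (c : Fin 3 → ℝ) : ℝ × ℝ → ℝ × ℝ :=
  fun z => c 0 • X₂ z + c 1 • X₃ z + c 2 • X₄ z

noncomputable def sndL : (ℝ × ℝ) →L[ℝ] ℝ := ContinuousLinearMap.snd ℝ ℝ ℝ
noncomputable def fstL : (ℝ × ℝ) →L[ℝ] ℝ := ContinuousLinearMap.fst ℝ ℝ ℝ

@[simp] lemma fstL_apply (w : ℝ × ℝ) : fstL w = w.1 := rfl
@[simp] lemma sndL_apply (w : ℝ × ℝ) : sndL w = w.2 := rfl

lemma hasFDerivAt_s {z : ℝ × ℝ} (hz : z.2 < 0) :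
    HasFDerivAt (fun w : ℝ × ℝ => Real.sqrt (-w.2)) ((1 / (2 * Real.sqrt (-z.2))) • (-sndL)) z := by
  have h1 : HasFDerivAt (fun w : ℝ × ℝ => -w.2) (-sndL) z := (hasFDerivAt_snd.neg)
  exact h1.sqrt (by simp; linarith)

lemma hasFDerivAt_sinv {z : ℝ × ℝ} (hz : z.2 < 0) :
    HasFDerivAt (fun w : ℝ × ℝ => (Real.sqrt (-w.2))⁻¹)
      ((1 / (2 * Real.sqrt (-z.2) ^ 3)) • sndL) z := by
  have hs : 0 < Real.sqrt (-z.2) := Real.sqrt_pos.2 (by linarith)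
  have h := (hasDerivAt_inv (ne_of_gt hs)).comp_hasFDerivAt z (hasFDerivAt_s hz)
  have heq : (-(Real.sqrt (-z.2) ^ 2)⁻¹ • (1 / (2 * Real.sqrt (-z.2))) • (-sndL))
      = ((1 / (2 * Real.sqrt (-z.2) ^ 3)) • sndL) := by
    refine ContinuousLinearMap.ext fun w => ?_
    simp only [ContinuousLinearMap.smul_apply, ContinuousLinearMap.neg_apply, smul_eq_mul]
    have hne : Real.sqrt (-z.2) ≠ 0 := ne_of_gt hs
    have key : -(Real.sqrt (-z.2) ^ 2)⁻¹ * (1 / (2 * Real.sqrt (-z.2))) * (-1 : ℝ)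
        = 1 / (2 * Real.sqrt (-z.2) ^ 3) := by
      field_simp
    linear_combination (sndL w) * key
  rw [heq] at h
  exact h

lemma hX₁ {z : ℝ × ℝ} (hz : z.2 < 0) :
    HasFDerivAt X₁ (((1 / (2 * Real.sqrt (-z.2) ^ 3)) • sndL).prod 0) z := by
  have h1 : HasFDerivAt (fun w : ℝ × ℝ => 1 / Real.sqrt (-w.2))
      ((1 / (2 * Real.sqrt (-z.2) ^ 3)) • sndL) z := by
    simpa [one_div] using hasFDerivAt_sinv hz
  exact h1.prodMk (hasFDerivAt_const 0 z)

lemma hX₂ (z : ℝ × ℝ) : HasFDerivAt X₂ (0 : (ℝ × ℝ) →L[ℝ] ℝ × ℝ) z := hasFDerivAt_const _ z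

lemma hX₃ (z : ℝ × ℝ) : HasFDerivAt X₃ (fstL.prod (-sndL)) z := by
  exact (fstL.prod (-sndL)).hasFDerivAt

lemma hX₄ (z : ℝ × ℝ) :
    HasFDerivAt X₄ ((z.1 • fstL + z.1 • fstL).prod
      (((-2) * z.1) • sndL + z.2 • ((-2 : ℝ) • fstL))) z := by
  have h1 : HasFDerivAt (fun w : ℝ × ℝ => w.1 ^ 2) (z.1 • fstL + z.1 • fstL) z := by
    simpa [pow_two, Pi.mul_def] using (hasFDerivAt_fst.mul hasFDerivAt_fst : HasFDerivAt
      (fun w : ℝ × ℝ => w.1 * w.1) _ z)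
  have h2 : HasFDerivAt (fun w : ℝ × ℝ => -2 * w.1 * w.2)
      (((-2) * z.1) • sndL + z.2 • ((-2 : ℝ) • fstL)) z := by
    exact ((hasFDerivAt_fst.const_mul (-2)).mul hasFDerivAt_snd)
  exact h1.prodMk h2

lemma hX₅ {z : ℝ × ℝ} (hz : z.2 < 0) :
    HasFDerivAt X₅ ((z.1 • ((1 / (2 * Real.sqrt (-z.2) ^ 3)) • sndL)
        + (Real.sqrt (-z.2))⁻¹ • fstL).prod
      ((2 : ℝ) • ((1 / (2 * Real.sqrt (-z.2))) • (-sndL)))) z := by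
  have h1 : HasFDerivAt (fun w : ℝ × ℝ => w.1 / Real.sqrt (-w.2))
      (z.1 • ((1 / (2 * Real.sqrt (-z.2) ^ 3)) • sndL) + (Real.sqrt (-z.2))⁻¹ • fstL) z := by
    simpa [div_eq_mul_inv, Pi.mul_def, fstL] using (hasFDerivAt_fst.mul (hasFDerivAt_sinv hz))
  have h2 : HasFDerivAt (fun w : ℝ × ℝ => 2 * Real.sqrt (-w.2))
      ((2 : ℝ) • ((1 / (2 * Real.sqrt (-z.2))) • (-sndL))) z :=
    (hasFDerivAt_s hz).const_mul 2
  exact h1.prodMk h2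

section Brackets
variable {z : ℝ × ℝ}

lemma b15 (hz : z.2 < 0) : bracket X₁ X₅ z = 0 := by
  have hs0 : 0 < Real.sqrt (-z.2) := Real.sqrt_pos.2 (by linarith)
  have hs2 : Real.sqrt (-z.2) ^ 2 = -z.2 := Real.sq_sqrt (by linarith)
  rw [bracket, (hX₁ hz).fderiv, (hX₅ hz).fderiv]
  simp only [ContinuousLinearMap.prod_apply, ContinuousLinearMap.add_apply,
    ContinuousLinearMap.smul_apply, ContinuousLinearMap.neg_apply,
    ContinuousLinearMap.zero_apply, fstL_apply, sndL_apply, smul_eq_mul,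
    X₁, X₅, Prod.smul_mk, Prod.mk_sub_mk, smul_zero, mul_zero, sub_zero]
  set s := Real.sqrt (-z.2) with hsdef
  have hne : s ≠ 0 := ne_of_gt hs0
  have hp : z.2 = -s ^ 2 := by rw [hs2]; ring
  rw [Prod.ext_iff]
  constructor
  all_goals simp
  all_goals try rw [hp]
  all_goals field_simp
  all_goals try ring

lemma b21 (hz : z.2 < 0) : bracket X₂ X₁ z = 0 := by
  rw [bracket, (hX₁ hz).fderiv, (hX₂ z).fderiv]
  simp only [ContinuousLinearMap.prod_apply, ContinuousLinearMap.smul_apply,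
    ContinuousLinearMap.zero_apply, sndL_apply, smul_eq_mul, X₁, X₂]
  simp

lemma b31 (hz : z.2 < 0) : bracket X₃ X₁ z = (-(1/2) : ℝ) • X₁ z := by
  have hs0 : 0 < Real.sqrt (-z.2) := Real.sqrt_pos.2 (by linarith)
  have hs2 : Real.sqrt (-z.2) ^ 2 = -z.2 := Real.sq_sqrt (by linarith)
  rw [bracket, (hX₁ hz).fderiv, (hX₃ z).fderiv]
  simp only [ContinuousLinearMap.prod_apply, ContinuousLinearMap.add_apply,
    ContinuousLinearMap.smul_apply, ContinuousLinearMap.neg_apply,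
    ContinuousLinearMap.zero_apply, fstL_apply, sndL_apply, smul_eq_mul,
    X₁, X₃, Prod.smul_mk, Prod.mk_sub_mk, smul_zero, mul_zero, sub_zero]
  set s := Real.sqrt (-z.2) with hsdef
  have hne : s ≠ 0 := ne_of_gt hs0
  have hp : z.2 = -s ^ 2 := by rw [hs2]; ring
  rw [Prod.ext_iff]
  constructor
  all_goals simp
  all_goals try rw [hp]
  all_goals field_simp
  all_goals try ring

lemma b41 (hz : z.2 < 0) : bracket X₄ X₁ z = (-1 : ℝ) • X₅ z := by
  have hs0 : 0 < Real.sqrt (-z.2) := Real.sqrt_pos.2 (by linarith)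
  have hs2 : Real.sqrt (-z.2) ^ 2 = -z.2 := Real.sq_sqrt (by linarith)
  rw [bracket, (hX₁ hz).fderiv, (hX₄ z).fderiv]
  simp only [ContinuousLinearMap.prod_apply, ContinuousLinearMap.add_apply,
    ContinuousLinearMap.smul_apply, ContinuousLinearMap.neg_apply,
    ContinuousLinearMap.zero_apply, fstL_apply, sndL_apply, smul_eq_mul,
    X₁, X₄, X₅, Prod.smul_mk, Prod.mk_sub_mk, smul_zero, mul_zero, sub_zero]
  set s := Real.sqrt (-z.2) with hsdef
  have hne : s ≠ 0 := ne_of_gt hs0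
  have hp : z.2 = -s ^ 2 := by rw [hs2]; ring
  rw [Prod.ext_iff]
  constructor
  all_goals simp
  all_goals try rw [hp]
  all_goals field_simp
  all_goals try ring

lemma b25 (hz : z.2 < 0) : bracket X₂ X₅ z = X₁ z := by
  have hs0 : 0 < Real.sqrt (-z.2) := Real.sqrt_pos.2 (by linarith)
  rw [bracket, (hX₅ hz).fderiv, (hX₂ z).fderiv]
  simp only [ContinuousLinearMap.prod_apply, ContinuousLinearMap.add_apply,
    ContinuousLinearMap.smul_apply, ContinuousLinearMap.neg_apply,
    ContinuousLinearMap.zero_apply, fstL_apply, sndL_apply, smul_eq_mul,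
    X₁, X₂, Prod.smul_mk, Prod.mk_sub_mk, smul_zero, mul_zero, sub_zero]
  set s := Real.sqrt (-z.2) with hsdef
  have hne : s ≠ 0 := ne_of_gt hs0
  rw [Prod.ext_iff]
  constructor
  all_goals simp
  all_goals field_simp
  all_goals try ring

lemma b35 (hz : z.2 < 0) : bracket X₃ X₅ z = ((1/2 : ℝ)) • X₅ z := by
  have hs0 : 0 < Real.sqrt (-z.2) := Real.sqrt_pos.2 (by linarith)
  have hs2 : Real.sqrt (-z.2) ^ 2 = -z.2 := Real.sq_sqrt (by linarith)
  rw [bracket, (hX₅ hz).fderiv, (hX₃ z).fderiv]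
  simp only [ContinuousLinearMap.prod_apply, ContinuousLinearMap.add_apply,
    ContinuousLinearMap.smul_apply, ContinuousLinearMap.neg_apply,
    ContinuousLinearMap.zero_apply, fstL_apply, sndL_apply, smul_eq_mul,
    X₃, X₅, Prod.smul_mk, Prod.mk_sub_mk, smul_zero, mul_zero, sub_zero]
  set s := Real.sqrt (-z.2) with hsdef
  have hne : s ≠ 0 := ne_of_gt hs0
  have hp : z.2 = -s ^ 2 := by rw [hs2]; ring
  rw [Prod.ext_iff]
  constructor
  all_goals simp
  all_goals try rw [hp]
  all_goals field_simp
  all_goals try ring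

lemma b45 (hz : z.2 < 0) : bracket X₄ X₅ z = 0 := by
  have hs0 : 0 < Real.sqrt (-z.2) := Real.sqrt_pos.2 (by linarith)
  have hs2 : Real.sqrt (-z.2) ^ 2 = -z.2 := Real.sq_sqrt (by linarith)
  rw [bracket, (hX₅ hz).fderiv, (hX₄ z).fderiv]
  simp only [ContinuousLinearMap.prod_apply, ContinuousLinearMap.add_apply,
    ContinuousLinearMap.smul_apply, ContinuousLinearMap.neg_apply,
    ContinuousLinearMap.zero_apply, fstL_apply, sndL_apply, smul_eq_mul,
    X₄, X₅, Prod.smul_mk, Prod.mk_sub_mk, smul_zero, mul_zero, sub_zero]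
  set s := Real.sqrt (-z.2) with hsdef
  have hne : s ≠ 0 := ne_of_gt hs0
  have hp : z.2 = -s ^ 2 := by rw [hs2]; ring
  rw [Prod.ext_iff]
  constructor
  all_goals simp
  all_goals try rw [hp]
  all_goals field_simp
  all_goals try ring

lemma bracket_antisymm (V W : ℝ × ℝ → ℝ × ℝ) (z : ℝ × ℝ) :
    bracket V W z = -bracket W V z := by
  simp [bracket]

lemma bracket_self (V : ℝ × ℝ → ℝ × ℝ) (z : ℝ × ℝ) : bracket V V z = 0 := sub_self _

end Brackets

lemma hY₂ (c : Fin 3 → ℝ) (z : ℝ × ℝ) :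
    HasFDerivAt (Y₂ c)
      ((c 0) • (0 : (ℝ × ℝ) →L[ℝ] ℝ × ℝ) + (c 1) • (fstL.prod (-sndL))
        + (c 2) • ((z.1 • fstL + z.1 • fstL).prod
            (((-2) * z.1) • sndL + z.2 • ((-2 : ℝ) • fstL)))) z := by
  exact (((hX₂ z).const_smul (c 0)).add ((hX₃ z).const_smul (c 1))).add
    ((hX₄ z).const_smul (c 2))

lemma bY (c d : Fin 3 → ℝ) (z : ℝ × ℝ) :
    bracket (Y₂ c) (Y₂ d) z =
      Y₂ ![c 0 * d 1 - c 1 * d 0, 2 * (c 0 * d 2 - c 2 * d 0), c 1 * d 2 - c 2 * d 1] z := by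
  rw [bracket, (hY₂ c z).fderiv, (hY₂ d z).fderiv]
  simp only [Y₂, X₂, X₃, X₄, Matrix.cons_val_zero, Matrix.cons_val_one, Matrix.head_cons,
    Matrix.cons_val_two, Matrix.tail_cons,
    ContinuousLinearMap.add_apply, ContinuousLinearMap.smul_apply,
    ContinuousLinearMap.prod_apply, ContinuousLinearMap.neg_apply,
    ContinuousLinearMap.zero_apply, fstL_apply, sndL_apply,
    Prod.smul_mk, Prod.mk_add_mk, Prod.mk_sub_mk, smul_eq_mul, smul_zero, Prod.fst_add,
    Prod.snd_add]
  rw [Prod.ext_iff]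
  constructor
  all_goals simp
  all_goals ring

open LieAlgebra.SpecialLinear in
noncomputable def φsl : (LieAlgebra.SpecialLinear.sl (Fin 2) ℝ) ≃ₗ[ℝ] (Fin 3 → ℝ) where
  toFun A := ![A.val 0 1, -2 * A.val 0 0, -(A.val 1 0)]
  map_add' A B := by
    funext i
    fin_cases i <;> simp <;> ring
  map_smul' r A := by
    have hs : ((r • A : LieAlgebra.SpecialLinear.sl (Fin 2) ℝ) :
        Matrix (Fin 2) (Fin 2) ℝ) = r • A.val := rfl
    funext i
    fin_cases i <;> simp [hs, Matrix.smul_apply] <;> ring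
  invFun c := ⟨!![-(c 1) / 2, c 0; -(c 2), (c 1) / 2],
    LinearMap.mem_ker.2 (by simp [Matrix.traceLinearMap, Matrix.trace_fin_two]; ring)⟩
  left_inv A := by
    have hA : A.val 0 0 + A.val 1 1 = 0 := by
      have h : Matrix.trace (A.val) = 0 := A.2
      simpa [Matrix.trace_fin_two] using h
    apply Subtype.ext
    ext i j
    fin_cases i <;> fin_cases j <;> simp <;> linarith
  right_inv c := by
    funext i
    fin_cases i <;> simp <;> ring

lemma sl_trace_eq (A : LieAlgebra.SpecialLinear.sl (Fin 2) ℝ) :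
    A.val 0 0 + A.val 1 1 = 0 := by
  have h : Matrix.trace (A.val) = 0 := A.2
  simpa [Matrix.trace_fin_two] using h

lemma φsl_bracket (A B : LieAlgebra.SpecialLinear.sl (Fin 2) ℝ) :
    φsl ⁅A, B⁆ = ![φsl A 0 * φsl B 1 - φsl A 1 * φsl B 0,
      2 * (φsl A 0 * φsl B 2 - φsl A 2 * φsl B 0),
      φsl A 1 * φsl B 2 - φsl A 2 * φsl B 1] := by
  have hA := sl_trace_eq A
  have hB := sl_trace_eq B
  have hbr : (⁅A, B⁆ : LieAlgebra.SpecialLinear.sl (Fin 2) ℝ).val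
      = A.val * B.val - B.val * A.val := rfl
  funext i
  fin_cases i
  · simp [φsl, hbr, Matrix.sub_apply, Matrix.mul_apply, Fin.sum_univ_two]
    linear_combination A.val 0 1 * hB - B.val 0 1 * hA
  · simp [φsl, hbr, Matrix.sub_apply, Matrix.mul_apply, Fin.sum_univ_two]
    ring
  · simp [φsl, hbr, Matrix.sub_apply, Matrix.mul_apply, Fin.sum_univ_two]
    linear_combination A.val 1 0 * hB - B.val 1 0 * hA

lemma sqrt_four : Real.sqrt 4 = 2 := by
  rw [show (4 : ℝ) = 2 ^ 2 by norm_num, Real.sqrt_sq (by norm_num : (0:ℝ) ≤ 2)]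


/-- `V = V₁ ⊕ₛ V₂`: `V₁ = span{X₁,X₅}` is a 2-dimensional abelian
ideal (the radical), `V₂ = span{X₂,X₃,X₄}` is a subalgebra isomorphic to
`sl(2,ℝ)`, `[V₂,V₁] ⊆ V₁` and `V₁ ∩ V₂ = 0`. -/
theorem levi_decomposition :
    (∀ z ∈ O, bracket X₁ X₅ z = 0) ∧
    (∀ a b : ℝ, (∀ z ∈ O, a • X₁ z + b • X₅ z = 0) → a = 0 ∧ b = 0) ∧
    (∀ i : Fin 5, ∀ j : Fin 5, j = 0 ∨ j = 4 →
      ∃ a b : ℝ, ∀ z ∈ O, bracket (XF i) (XF j) z = a • X₁ z + b • X₅ z) ∧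
    (∀ c d : Fin 3 → ℝ, ∃ e : Fin 3 → ℝ, ∀ z ∈ O,
      bracket (Y₂ c) (Y₂ d) z = Y₂ e z) ∧
    (∃ φ : (LieAlgebra.SpecialLinear.sl (Fin 2) ℝ) ≃ₗ[ℝ] (Fin 3 → ℝ),
      ∀ A B : LieAlgebra.SpecialLinear.sl (Fin 2) ℝ, ∀ z ∈ O,
        bracket (Y₂ (φ A)) (Y₂ (φ B)) z = Y₂ (φ ⁅A, B⁆) z) ∧
    (∀ a b : ℝ, ∀ c : Fin 3 → ℝ,
      (∀ z ∈ O, a • X₁ z + b • X₅ z = Y₂ c z) →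
        a = 0 ∧ b = 0 ∧ c = 0) := by
  have hmem1 : ((0 : ℝ), (-1 : ℝ)) ∈ O := by norm_num [O]
  have hmem2 : ((0 : ℝ), (-4 : ℝ)) ∈ O := by norm_num [O]
  have hmem3 : ((1 : ℝ), (-1 : ℝ)) ∈ O := by norm_num [O]
  refine ⟨fun z hz => b15 hz, ?_, ?_, ?_, ?_, ?_⟩
  · -- independence of X₁, X₅
    intro a b h
    have h1 := h _ hmem1
    simp [X₁, X₅, Prod.ext_iff] at h1
    constructor <;> linarith [h1.1, h1.2]
  · -- ideal property
    intro i j hj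
    rcases hj with rfl | rfl
    · fin_cases i
      · exact ⟨0, 0, fun z hz => by
          simpa [XF] using (bracket_self X₁ z)⟩
      · exact ⟨0, 0, fun z hz => by simpa [XF] using b21 hz⟩
      · exact ⟨-(1/2), 0, fun z hz => by simpa [XF] using b31 hz⟩
      · exact ⟨0, -1, fun z hz => by simpa [XF] using b41 hz⟩
      · exact ⟨0, 0, fun z hz => by
          have h : bracket X₅ X₁ z = 0 := by rw [bracket_antisymm, b15 hz]; simp
          simpa [XF] using h⟩
    · fin_cases i
      · exact ⟨0, 0, fun z hz => by simpa [XF] using b15 hz⟩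
      · exact ⟨1, 0, fun z hz => by simpa [XF] using b25 hz⟩
      · exact ⟨0, 1/2, fun z hz => by simpa [XF] using b35 hz⟩
      · exact ⟨0, 0, fun z hz => by simpa [XF] using b45 hz⟩
      · exact ⟨0, 0, fun z hz => by simpa [XF] using (bracket_self X₅ z)⟩
  · -- subalgebra
    intro c d
    exact ⟨_, fun z hz => bY c d z⟩
  · -- iso with sl2
    refine ⟨φsl, fun A B z hz => ?_⟩
    rw [bY, φsl_bracket]
  · -- trivial intersection
    intro a b c h
    have h1 := h _ hmem1
    have h2 := h _ hmem2
    have h3 := h _ hmem3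
    simp [X₁, X₂, X₃, X₄, X₅, Y₂, Prod.ext_iff, sqrt_four] at h1 h2 h3
    have hb : b = 0 := by linarith [h1.2, h2.2]
    have hc1 : c 1 = 0 := by linarith [h1.2, h2.2]
    have ha : a = 0 := by
      have e1 := h1.1
      have e2 := h2.1
      linarith
    have hc0 : c 0 = 0 := by linarith [h1.1]
    have hc2 : c 2 = 0 := by
      have e3 := h3.1
      rw [ha, hb] at e3
      simp at e3
      linarith
    refine ⟨ha, hb, ?_⟩
    funext i
    fin_cases i <;> simp [hc0, hc1, hc2]
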